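/- For all α, β ∈ M_ℝ there exists t > 0 such that (−t)·α ≤_M β ≤_M t·α, where t·[c,u] = [c,(u_1+t,…,u_n+t)] denotes the translation action of ℝ on M_ℝ. -/

import Mathlib

/-- A point of the affine version of `L` over `H`: a maximal chain
`c : ⊥ = c₀ < c₁ < ⋯ < cₙ = ⊤` of `L` together with a nondecreasing tuple
`u = (u₁ ≤ ⋯ ≤ uₙ)` of elements of `H` (indexed here by `Fin n`, so `u ⟨k⟩ = u_{k+1}`). -/
structure AffinePt (L : Type) [Lattice L] [BoundedOrder L] (n : ℕ)
    (H : Type) [Preorder H] : Type where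
  c : Fin (n + 1) → L
  hc0 : c 0 = ⊥
  hcn : c (Fin.last n) = ⊤
  hcmono : StrictMono c
  u : Fin n → H
  humono : Monotone u

/-- The basic identification: `(c, u)` and `(c', u)` are identified whenever
`u_i = u_{i+1}` for every index `1 ≤ i ≤ n - 1` with `c_i ≠ c'_i`. -/
def basicRel {L : Type} [Lattice L] [BoundedOrder L] {n : ℕ} {H : Type} [Preorder H]
    (p q : AffinePt L n H) : Prop :=
  p.u = q.u ∧ ∀ (j : ℕ) (hj : j + 1 < n),
    p.c ⟨j + 1, by omega⟩ ≠ q.c ⟨j + 1, by omega⟩ →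
      p.u ⟨j, by omega⟩ = p.u ⟨j + 1, hj⟩

/-- The affine version `M_H` of `L` over `H`: the quotient of the set of pairs `(c, u)`
by the equivalence relation generated by `basicRel`. -/
abbrev AffineVersion (L : Type) [Lattice L] [BoundedOrder L] (n : ℕ)
    (H : Type) [Preorder H] : Type :=
  Quot (basicRel (L := L) (n := n) (H := H))

/-- The class `[c, u]` of a pair `(c, u)` in the affine version. -/
def mkA {L : Type} [Lattice L] [BoundedOrder L] {n : ℕ} {H : Type} [Preorder H]
    (p : AffinePt L n H) : AffineVersion L n H :=
  Quot.mk _ p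

/-- One step of the order: `α ≤ β` via representatives `[c, x]`, `[c, y]` with the same
chain `c` and `x ≤ y` coordinatewise. -/
def stepLe {L : Type} [Lattice L] [BoundedOrder L] {n : ℕ} {H : Type} [Preorder H]
    (α β : AffineVersion L n H) : Prop :=
  ∃ p q : AffinePt L n H, mkA p = α ∧ mkA q = β ∧ p.c = q.c ∧ ∀ k, p.u k ≤ q.u k

/-- The order `≤_M` on the affine version: the reflexive-transitive closure of `stepLe`,
i.e. existence of a finite sequence of one-chain comparisons. -/
def leM {L : Type} [Lattice L] [BoundedOrder L] {n : ℕ} {H : Type} [Preorder H]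
    (α β : AffineVersion L n H) : Prop :=
  Relation.ReflTransGen stepLe α β

/-- Translation of a point of the affine version over `ℝ` by `t`. -/
def translatePt {L : Type} [Lattice L] [BoundedOrder L] {n : ℕ} (t : ℝ)
    (p : AffinePt L n ℝ) : AffinePt L n ℝ where
  c := p.c
  hc0 := p.hc0
  hcn := p.hcn
  hcmono := p.hcmono
  u := fun k => p.u k + t
  humono := fun _ _ h => add_le_add_left (p.humono h) t

/-- The translation action of `ℝ` on `M_ℝ`: `t · [c, u] = [c, (u₁ + t, …, uₙ + t)]`. -/
def translateAff {L : Type} [Lattice L] [BoundedOrder L] {n : ℕ} (t : ℝ) :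
    AffineVersion L n ℝ → AffineVersion L n ℝ :=
  Quot.map (translatePt t) (by
    intro p q hpq
    obtain ⟨hu, hc⟩ := hpq
    constructor
    · funext k
      show p.u k + t = q.u k + t
      rw [hu]
    · intro j hj hne
      exact congrArg (fun z => z + t) (hc j hj hne))


/-- Replace the tuple by a constant one. -/
def constPt {L : Type} [Lattice L] [BoundedOrder L] {n : ℕ}
    (p : AffinePt L n ℝ) (v : ℝ) : AffinePt L n ℝ :=
  { p with u := fun _ => v, humono := monotone_const }

/-- Points with constant tuple are identified regardless of the chain. -/
lemma mkA_constPt_eq {L : Type} [Lattice L] [BoundedOrder L] {n : ℕ}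
    (p q : AffinePt L n ℝ) (v : ℝ) : mkA (constPt p v) = mkA (constPt q v) :=
  Quot.sound ⟨rfl, fun _ _ _ => rfl⟩

/-- The translation action of `ℝ` on `M_ℝ` is cofinal: for all `α, β ∈ M_ℝ` there is
`t > 0` with `(-t)·α ≤_M β ≤_M t·α`. -/
theorem stmt13 (L : Type) [Lattice L] [BoundedOrder L] (n : ℕ)
    (rk : L → ℕ) (hrk0 : rk ⊥ = 0) (hrkn : rk ⊤ = n)
    (hrkmono : StrictMono rk)
    (hrkcov : ∀ x y : L, x ⋖ y → rk y = rk x + 1)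
    (α β : AffineVersion L n ℝ) :
    ∃ t : ℝ, 0 < t ∧ leM (translateAff (-t) α) β ∧ leM β (translateAff t α) := by
  obtain ⟨p, rfl⟩ := Quot.exists_rep α
  obtain ⟨q, rfl⟩ := Quot.exists_rep β
  obtain ⟨B, hB⟩ := Finite.exists_le (fun k : Fin n => max |p.u k| |q.u k|)
  have hpB : ∀ k, |p.u k| ≤ |B| := fun k =>
    le_trans (le_trans (le_max_left _ _) (hB k)) (le_abs_self B)
  have hqB : ∀ k, |q.u k| ≤ |B| := fun k =>
    le_trans (le_trans (le_max_right _ _) (hB k)) (le_abs_self B)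
  set t : ℝ := 2 * |B| + 1 with ht
  refine ⟨t, by positivity, ?_, ?_⟩
  · have step1 : stepLe (translateAff (-t) (Quot.mk _ p)) (mkA (constPt p (-|B|))) := by
      refine ⟨translatePt (-t) p, constPt p (-|B|), rfl, rfl, rfl, fun k => ?_⟩
      have h1 : p.u k ≤ |B| := le_trans (le_abs_self _) (hpB k)
      show p.u k + (-t) ≤ -|B|
      rw [ht]; linarith
    have step2 : stepLe (mkA (constPt q (-|B|))) (Quot.mk _ q) := by
      refine ⟨constPt q (-|B|), q, rfl, rfl, rfl, fun k => ?_⟩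
      have h1 : -|B| ≤ q.u k := by
        have := neg_abs_le (q.u k); have := hqB k; linarith
      exact h1
    exact Relation.ReflTransGen.head step1
      (mkA_constPt_eq p q (-|B|) ▸ Relation.ReflTransGen.single step2)
  · have step1 : stepLe (Quot.mk _ q) (mkA (constPt q |B|)) := by
      refine ⟨q, constPt q |B|, rfl, rfl, rfl, fun k => ?_⟩
      exact le_trans (le_abs_self _) (hqB k)
    have step2 : stepLe (mkA (constPt p |B|)) (translateAff t (Quot.mk _ p)) := by
      refine ⟨constPt p |B|, translatePt t p, rfl, rfl, rfl, fun k => ?_⟩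
      have h1 : -|B| ≤ p.u k := by
        have := neg_abs_le (p.u k); have := hpB k; linarith
      show |B| ≤ p.u k + t
      rw [ht]; linarith
    exact Relation.ReflTransGen.head step1
      (mkA_constPt_eq q p |B| ▸ Relation.ReflTransGen.single step2)
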